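/- (Theorem 2) Let A be a nonzero n×n real matrix admitting an exponential decay bound: there exist M > 0 and α > 0 such that ‖exp(tA)‖₂ ≤ M·exp(−α t) for all t ≥ 0. Let B be an n×m real matrix for which there exists σ > 0 such that ‖Bᵀ·v‖₂ ≥ σ·‖v‖₂ for all v ∈ ℝⁿ, and let P_R = ∫₀^∞ exp(tA)·B·Bᵀ·exp(tAᵀ) dt be the controllability Gramian. Let C_p be a p×n real matrix, and let E_R be a q×k real matrix and C_r a q×(n−k) real matrix, not both zero, with C_{r,R} = [E_R, C_r] the q×n horizontal concatenation (so ‖C_{r,R}‖_F² = ‖E_R‖_F² + ‖C_r‖_F²). Then tr(C_p·P_R·C_pᵀ) / tr(C_{r,R}·P_R·C_{r,R}ᵀ) ≤ 8·(M²·‖A‖₂·‖B‖₂²/(σ²·α)) · ‖C_p‖_F² / (‖E_R‖_F² + ‖C_r‖_F²), and in particular tr(C_{r,R}·P_R·C_{r,R}ᵀ) > 0 so the ratio is well defined. -/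

import Mathlib

open Matrix MeasureTheory
open scoped Matrix.Norms.L2Operator

/-- The Euclidean norm of a real vector. -/
noncomputable def euclNorm {ι : Type*} [Fintype ι] (x : ι → ℝ) : ℝ :=
  Real.sqrt (∑ i, x i ^ 2)

section helpers
variable {ι : Type*} [Fintype ι]

lemma euclNorm_eq (x : ι → ℝ) : euclNorm x = ‖(WithLp.equiv 2 (ι → ℝ)).symm x‖ := by
  rw [EuclideanSpace.norm_eq]; simp [euclNorm, sq_abs]

lemma euclNorm_nonneg (x : ι → ℝ) : 0 ≤ euclNorm x := Real.sqrt_nonneg _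

lemma sq_euclNorm (x : ι → ℝ) : euclNorm x ^ 2 = ∑ i, x i ^ 2 := by
  rw [euclNorm, Real.sq_sqrt (by positivity)]

end helpers

lemma euclNorm_mulVec_le {a b : Type*} [Fintype a] [Fintype b] [DecidableEq b]
    (M : Matrix a b ℝ) (v : b → ℝ) : euclNorm (M *ᵥ v) ≤ ‖M‖ * euclNorm v := by
  rw [euclNorm_eq, euclNorm_eq]
  exact M.l2_opNorm_mulVec ((WithLp.equiv 2 (b → ℝ)).symm v)

lemma norm_transpose_eq {a b : Type*} [Fintype a] [Fintype b] [DecidableEq a] [DecidableEq b]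
    (X : Matrix a b ℝ) : ‖Xᵀ‖ = ‖X‖ := by
  rw [← Matrix.l2_opNorm_conjTranspose X]; congr 1

lemma norm_exp_le_exp_norm' {𝔸 : Type*} [NormedRing 𝔸] [NormedAlgebra ℝ 𝔸] [CompleteSpace 𝔸]
    [NormOneClass 𝔸] (x : 𝔸) : ‖NormedSpace.exp x‖ ≤ Real.exp ‖x‖ := by
  rw [NormedSpace.exp_eq_tsum ℝ]
  have h1 : Summable fun n : ℕ => ‖(n.factorial⁻¹ : ℝ) • x ^ n‖ := by
    simpa [NormedSpace.expSeries_apply_eq] using NormedSpace.norm_expSeries_summable' (𝕂 := ℝ) x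
  refine (norm_tsum_le_tsum_norm h1).trans ?_
  have h2 : Summable fun n : ℕ => ‖x‖ ^ n / n.factorial :=
    Real.summable_pow_div_factorial ‖x‖
  refine (Summable.tsum_le_tsum (fun n => ?_) h1 h2).trans ?_
  · rw [norm_smul, norm_inv, Real.norm_natCast, inv_mul_eq_div, div_le_div_iff₀ (by positivity)
      (by positivity)]
    have := norm_pow_le x n
    calc ‖x ^ n‖ * n.factorial ≤ ‖x‖ ^ n * n.factorial := by gcongr
      _ = _ := rfl
  · rw [Real.exp_eq_exp_ℝ, NormedSpace.exp_eq_tsum ℝ]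
    exact le_of_eq (tsum_congr fun n => by rw [smul_eq_mul, div_eq_inv_mul])

lemma euclNorm_exp_mulVec_lower {n : Type*} [Fintype n] [DecidableEq n] [Nonempty n]
    (X : Matrix n n ℝ) (v : n → ℝ) :
    Real.exp (-‖X‖) * euclNorm v ≤ euclNorm (NormedSpace.exp X *ᵥ v) := by
  have key : euclNorm v ≤ Real.exp ‖X‖ * euclNorm (NormedSpace.exp X *ᵥ v) := by
    have h0 : NormedSpace.exp (-X) * NormedSpace.exp X = 1 := by
      rw [← Matrix.exp_add_of_commute _ _ (Commute.refl X).neg_left]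
      simp
    calc euclNorm v = euclNorm ((NormedSpace.exp (-X) * NormedSpace.exp X) *ᵥ v) := by
          rw [h0, Matrix.one_mulVec]
      _ = euclNorm (NormedSpace.exp (-X) *ᵥ (NormedSpace.exp X *ᵥ v)) := by
          rw [Matrix.mulVec_mulVec]
      _ ≤ ‖NormedSpace.exp (-X)‖ * euclNorm (NormedSpace.exp X *ᵥ v) :=
          euclNorm_mulVec_le _ _
      _ ≤ Real.exp ‖X‖ * euclNorm (NormedSpace.exp X *ᵥ v) := by
          gcongr
          · exact euclNorm_nonneg _
          · simpa using norm_exp_le_exp_norm' (-X)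
  rw [Real.exp_neg, inv_mul_le_iff₀ (Real.exp_pos _)] at *
  linarith [key]

lemma integral_exp_neg_mul_Ioi {c : ℝ} (hc : 0 < c) :
    ∫ t in Set.Ioi (0:ℝ), Real.exp (-c * t) = 1 / c := by
  have hderiv : ∀ x ∈ Set.Ici (0:ℝ), HasDerivAt (fun x => -Real.exp (-c*x)/c)
      (Real.exp (-c*x)) x := by
    intro x _
    have h := (((Real.hasDerivAt_exp (-c*x)).comp x
      ((hasDerivAt_id x).const_mul (-c))).neg.div_const c)
    refine h.congr_deriv ?_
    field_simp [hc.ne']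
  have hint : IntegrableOn (fun x => Real.exp (-c*x)) (Set.Ioi (0:ℝ)) :=
    exp_neg_integrableOn_Ioi 0 hc
  have htend : Filter.Tendsto (fun x => -Real.exp (-c*x)/c) Filter.atTop (nhds 0) := by
    have h1 : Filter.Tendsto (fun x : ℝ => -c*x) Filter.atTop Filter.atBot :=
      Filter.tendsto_id.const_mul_atTop_of_neg (neg_neg_iff_pos.mpr hc)
    have := (Real.tendsto_exp_atBot.comp h1).neg.div_const c
    simpa using this
  rw [integral_Ioi_of_hasDerivAt_of_tendsto' hderiv hint htend]
  simp [div_eq_inv_mul]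

lemma trace_conj_eq {n q : Type*} [Fintype n] [Fintype q] (C : Matrix q n ℝ)
    (Y : Matrix n n ℝ) :
    (C * Y * Cᵀ).trace = ∑ i, (fun a => C i a) ⬝ᵥ (Y *ᵥ fun a => C i a) := by
  simp only [Matrix.trace, Matrix.diag, Matrix.mul_apply, Matrix.mulVec, dotProduct,
    Finset.mul_sum, Finset.sum_mul, mul_assoc, Matrix.transpose_apply]
  refine Finset.sum_congr rfl fun x _ => ?_
  rw [Finset.sum_comm]

lemma quad_form_eq {n m q : Type*} [Fintype n] [Fintype m] [Fintype q]
    (E : Matrix n n ℝ) (B : Matrix n m ℝ) (C : Matrix q n ℝ) (i : q) :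
    (fun a => C i a) ⬝ᵥ ((E * (B * Bᵀ) * Eᵀ) *ᵥ fun a => C i a) =
      euclNorm (Bᵀ *ᵥ (Eᵀ *ᵥ fun a => C i a)) ^ 2 := by
  have hM : E * (B * Bᵀ) * Eᵀ = (Bᵀ * Eᵀ)ᵀ * (Bᵀ * Eᵀ) := by
    simp only [Matrix.transpose_mul, Matrix.transpose_transpose]
    simp only [Matrix.mul_assoc]
  rw [hM, sq_euclNorm, Matrix.mulVec_mulVec, ← Matrix.mulVec_mulVec,
    dotProduct_mulVec, Matrix.vecMul_transpose]
  simp [dotProduct, sq]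

lemma trace_transpose_mul_self {n q : Type*} [Fintype n] [Fintype q] (C : Matrix q n ℝ) :
    (Cᵀ * C).trace = ∑ i, ∑ a, C i a ^ 2 := by
  rw [Finset.sum_comm]
  simp [Matrix.trace, Matrix.diag, Matrix.mul_apply, sq]

lemma trace_transpose_mul_self_pos {n q : Type*} [Fintype n] [Fintype q]
    {C : Matrix q n ℝ} (hC : C ≠ 0) : 0 < (Cᵀ * C).trace := by
  rw [trace_transpose_mul_self]
  obtain ⟨i, a, hia⟩ : ∃ i a, C i a ≠ 0 := by
    by_contra h
    push_neg at h
    exact hC (by ext i a; simpa using h i a)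
  have h2 : (0:ℝ) < ∑ a, C i a ^ 2 :=
    Finset.sum_pos' (fun _ _ => sq_nonneg _) ⟨a, Finset.mem_univ a, by positivity⟩
  exact Finset.sum_pos' (fun j _ => Finset.sum_nonneg fun _ _ => sq_nonneg _)
    ⟨i, Finset.mem_univ i, h2⟩

noncomputable def traceCLM {n q : Type*} [Fintype n] [DecidableEq n] [Fintype q]
    (C : Matrix q n ℝ) : Matrix n n ℝ →L[ℝ] ℝ :=
  LinearMap.toContinuousLinearMap
  { toFun := fun X => (C * X * Cᵀ).trace
    map_add' := fun X Y => by simp [Matrix.mul_add, Matrix.add_mul]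
    map_smul' := fun r X => by simp [Matrix.mul_smul, Matrix.smul_mul] }

set_option maxHeartbeats 1000000 in
/-- Main bounds on traces against the Gramian. -/
lemma gramian_bounds {n m q : Type*} [Fintype n] [DecidableEq n] [Nonempty n]
    [Fintype m] [DecidableEq m] [Fintype q]
    (A : Matrix n n ℝ) (hA : A ≠ 0) (B : Matrix n m ℝ)
    (M α : ℝ) (hM : 0 < M) (hα : 0 < α)
    (hdecay : ∀ t : ℝ, 0 ≤ t → ‖NormedSpace.exp (t • A)‖ ≤ M * Real.exp (-α * t))
    (σ : ℝ) (hσ : 0 < σ)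
    (hB : ∀ v : n → ℝ, σ * euclNorm v ≤ euclNorm (Bᵀ *ᵥ v))
    (C : Matrix q n ℝ) :
    σ ^ 2 / (2 * ‖A‖) * (Cᵀ * C).trace ≤
      (C * (∫ t in Set.Ioi (0:ℝ),
        NormedSpace.exp (t • A) * (B * Bᵀ) * NormedSpace.exp (t • Aᵀ)) * Cᵀ).trace ∧
    (C * (∫ t in Set.Ioi (0:ℝ),
        NormedSpace.exp (t • A) * (B * Bᵀ) * NormedSpace.exp (t • Aᵀ)) * Cᵀ).trace ≤
      M ^ 2 * ‖B‖ ^ 2 / (2 * α) * (Cᵀ * C).trace := by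
  have hAn : (0:ℝ) < ‖A‖ := by simpa using norm_pos_iff.mpr hA
  set f : ℝ → Matrix n n ℝ := fun t =>
    NormedSpace.exp (t • A) * (B * Bᵀ) * NormedSpace.exp (t • Aᵀ) with hf
  have hte : ∀ t : ℝ, NormedSpace.exp (t • Aᵀ) = (NormedSpace.exp (t • A))ᵀ := by
    intro t; rw [← Matrix.transpose_smul, Matrix.exp_transpose]
  have hexpbT : ∀ t : ℝ, 0 ≤ t → ‖NormedSpace.exp (t • Aᵀ)‖ ≤ M * Real.exp (-α * t) := by
    intro t ht; rw [hte t, norm_transpose_eq]; exact hdecay t ht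
  -- continuity
  have hcont : Continuous f := by
    let +nondep : NormedAlgebra ℚ (Matrix n n ℝ) := .restrictScalars ℚ ℝ _
    have h1 : Continuous fun t : ℝ => NormedSpace.exp (t • A) :=
      NormedSpace.exp_continuous.comp (continuous_id.smul continuous_const)
    have h2 : Continuous fun t : ℝ => NormedSpace.exp (t • Aᵀ) :=
      NormedSpace.exp_continuous.comp (continuous_id.smul continuous_const)
    exact (h1.mul continuous_const).mul h2
  -- integrability
  have hgint : ∀ c : ℝ, 0 < c → ∀ K : ℝ,
      IntegrableOn (fun t => K * Real.exp (-c * t)) (Set.Ioi (0:ℝ)) := fun c hc K =>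
    (exp_neg_integrableOn_Ioi 0 hc).const_mul K
  have hBB : ‖B * Bᵀ‖ ≤ ‖B‖ ^ 2 := by
    have := Matrix.l2_opNorm_mul B Bᵀ
    rwa [norm_transpose_eq, ← sq] at this
  have hee : ∀ c t : ℝ, Real.exp (-c * t) * Real.exp (-c * t) = Real.exp (-(2*c) * t) := by
    intro c t; rw [← Real.exp_add]; congr 1; ring
  have hfband : ∀ t ∈ Set.Ioi (0:ℝ), ‖f t‖ ≤ M ^ 2 * ‖B‖ ^ 2 * Real.exp (-(2*α) * t) := by
    intro t ht
    have ht' : (0:ℝ) ≤ t := le_of_lt ht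
    have h1 := hdecay t ht'
    have h2 := hexpbT t ht'
    calc ‖f t‖ ≤ ‖NormedSpace.exp (t • A) * (B * Bᵀ)‖ * ‖NormedSpace.exp (t • Aᵀ)‖ :=
          Matrix.l2_opNorm_mul _ _
      _ ≤ (‖NormedSpace.exp (t • A)‖ * ‖B * Bᵀ‖) * ‖NormedSpace.exp (t • Aᵀ)‖ :=
          mul_le_mul_of_nonneg_right (Matrix.l2_opNorm_mul _ _) (norm_nonneg _)
      _ ≤ ((M * Real.exp (-α * t)) * ‖B‖ ^ 2) * (M * Real.exp (-α * t)) :=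
          mul_le_mul (mul_le_mul h1 hBB (norm_nonneg _) (by positivity))
            h2 (norm_nonneg _) (by positivity)
      _ = M ^ 2 * ‖B‖ ^ 2 * (Real.exp (-α * t) * Real.exp (-α * t)) := by ring
      _ = M ^ 2 * ‖B‖ ^ 2 * Real.exp (-(2*α) * t) := by rw [hee]
  have hfint : IntegrableOn f (Set.Ioi (0:ℝ)) := by
    refine Integrable.mono' (hgint (2*α) (by positivity) (M ^ 2 * ‖B‖ ^ 2))
      hcont.aestronglyMeasurable ?_
    exact (ae_restrict_iff' measurableSet_Ioi).mpr (Filter.Eventually.of_forall hfband)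
  -- trace-integral exchange
  have hswap : (C * (∫ t in Set.Ioi (0:ℝ), f t) * Cᵀ).trace
      = ∫ t in Set.Ioi (0:ℝ), (C * f t * Cᵀ).trace := by
    rw [show (C * (∫ t in Set.Ioi (0:ℝ), f t) * Cᵀ).trace
        = traceCLM C (∫ t in Set.Ioi (0:ℝ), f t) from rfl,
      ← ContinuousLinearMap.integral_comp_comm _ hfint]
    rfl
  have htrint : Integrable (fun t => (C * f t * Cᵀ).trace) (volume.restrict (Set.Ioi (0:ℝ))) :=
    (traceCLM C).integrable_comp hfint
  -- pointwise formula
  have hpt : ∀ t : ℝ, (C * f t * Cᵀ).trace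
      = ∑ i, euclNorm (Bᵀ *ᵥ (NormedSpace.exp (t • Aᵀ) *ᵥ fun a => C i a)) ^ 2 := by
    intro t
    have : f t = NormedSpace.exp (t • A) * (B * Bᵀ) * (NormedSpace.exp (t • A))ᵀ := by
      rw [hf, ← hte t]
    rw [this, trace_conj_eq]
    refine Finset.sum_congr rfl fun i _ => ?_
    rw [quad_form_eq, hte t]
  -- pointwise bounds
  have hup : ∀ t ∈ Set.Ioi (0:ℝ), (C * f t * Cᵀ).trace
      ≤ (M ^ 2 * ‖B‖ ^ 2 * (Cᵀ * C).trace) * Real.exp (-(2*α) * t) := by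
    intro t ht
    have ht' : (0:ℝ) ≤ t := le_of_lt ht
    rw [hpt t]
    calc ∑ i, euclNorm (Bᵀ *ᵥ (NormedSpace.exp (t • Aᵀ) *ᵥ fun a => C i a)) ^ 2
        ≤ ∑ i, M ^ 2 * ‖B‖ ^ 2 * Real.exp (-(2*α) * t) * (∑ a, C i a ^ 2) := by
          refine Finset.sum_le_sum fun i _ => ?_
          have h1 : euclNorm (Bᵀ *ᵥ (NormedSpace.exp (t • Aᵀ) *ᵥ fun a => C i a))
              ≤ ‖B‖ * (M * Real.exp (-α * t)) * euclNorm (fun a => C i a) := by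
            calc euclNorm (Bᵀ *ᵥ (NormedSpace.exp (t • Aᵀ) *ᵥ fun a => C i a))
                ≤ ‖Bᵀ‖ * euclNorm (NormedSpace.exp (t • Aᵀ) *ᵥ fun a => C i a) :=
                  euclNorm_mulVec_le _ _
              _ ≤ ‖Bᵀ‖ * (‖NormedSpace.exp (t • Aᵀ)‖ * euclNorm (fun a => C i a)) :=
                  mul_le_mul_of_nonneg_left (euclNorm_mulVec_le _ _) (norm_nonneg _)
              _ ≤ ‖B‖ * ((M * Real.exp (-α * t)) * euclNorm (fun a => C i a)) := by
                  rw [norm_transpose_eq]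
                  exact mul_le_mul_of_nonneg_left
                    (mul_le_mul_of_nonneg_right (hexpbT t ht') (euclNorm_nonneg _))
                    (norm_nonneg _)
              _ = ‖B‖ * (M * Real.exp (-α * t)) * euclNorm (fun a => C i a) := by ring
          calc euclNorm (Bᵀ *ᵥ (NormedSpace.exp (t • Aᵀ) *ᵥ fun a => C i a)) ^ 2
              ≤ (‖B‖ * (M * Real.exp (-α * t)) * euclNorm (fun a => C i a)) ^ 2 :=
                pow_le_pow_left₀ (euclNorm_nonneg _) h1 2
            _ = M ^ 2 * ‖B‖ ^ 2 * (Real.exp (-α*t) * Real.exp (-α*t))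
                  * euclNorm (fun a => C i a) ^ 2 := by ring
            _ = M ^ 2 * ‖B‖ ^ 2 * Real.exp (-(2*α) * t) * (∑ a, C i a ^ 2) := by
                rw [hee, sq_euclNorm]
      _ = (M ^ 2 * ‖B‖ ^ 2 * (Cᵀ * C).trace) * Real.exp (-(2*α) * t) := by
          rw [← Finset.mul_sum, ← trace_transpose_mul_self]
          ring
  have hlo : ∀ t ∈ Set.Ioi (0:ℝ),
      (σ ^ 2 * (Cᵀ * C).trace) * Real.exp (-(2*‖A‖) * t) ≤ (C * f t * Cᵀ).trace := by
    intro t ht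
    have ht' : (0:ℝ) ≤ t := le_of_lt ht
    rw [hpt t]
    calc (σ ^ 2 * (Cᵀ * C).trace) * Real.exp (-(2*‖A‖) * t)
        = ∑ i, σ ^ 2 * Real.exp (-(2*‖A‖) * t) * (∑ a, C i a ^ 2) := by
          rw [← Finset.mul_sum, ← trace_transpose_mul_self]
          ring
      _ ≤ ∑ i, euclNorm (Bᵀ *ᵥ (NormedSpace.exp (t • Aᵀ) *ᵥ fun a => C i a)) ^ 2 := by
          refine Finset.sum_le_sum fun i _ => ?_
          have h2 := euclNorm_exp_mulVec_lower (t • Aᵀ) (fun a => C i a)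
          have h3 : ‖t • Aᵀ‖ = ‖A‖ * t := by
            rw [norm_smul, Real.norm_eq_abs, abs_of_nonneg ht', norm_transpose_eq]
            ring
          rw [h3] at h2
          have h1 : σ * (Real.exp (-(‖A‖ * t)) * euclNorm (fun a => C i a))
              ≤ euclNorm (Bᵀ *ᵥ (NormedSpace.exp (t • Aᵀ) *ᵥ fun a => C i a)) :=
            le_trans (mul_le_mul_of_nonneg_left h2 (le_of_lt hσ)) (hB _)
          calc σ ^ 2 * Real.exp (-(2*‖A‖) * t) * (∑ a, C i a ^ 2)
              = (σ * (Real.exp (-(‖A‖ * t)) * euclNorm (fun a => C i a))) ^ 2 := by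
                rw [← sq_euclNorm]
                have : Real.exp (-(‖A‖*t)) * Real.exp (-(‖A‖*t)) = Real.exp (-(2*‖A‖) * t) := by
                  rw [← Real.exp_add]; congr 1; ring
                rw [← this]; ring
            _ ≤ euclNorm (Bᵀ *ᵥ (NormedSpace.exp (t • Aᵀ) *ᵥ fun a => C i a)) ^ 2 :=
                pow_le_pow_left₀ (mul_nonneg hσ.le
                  (mul_nonneg (Real.exp_pos _).le (euclNorm_nonneg _))) h1 2
  constructor
  · rw [hswap]
    have key : ∫ t in Set.Ioi (0:ℝ), (σ ^ 2 * (Cᵀ * C).trace) * Real.exp (-(2*‖A‖) * t)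
        ≤ ∫ t in Set.Ioi (0:ℝ), (C * f t * Cᵀ).trace :=
      setIntegral_mono_on (hgint (2*‖A‖) (by positivity) _) htrint measurableSet_Ioi hlo
    refine le_trans (le_of_eq ?_) key
    rw [MeasureTheory.integral_const_mul, integral_exp_neg_mul_Ioi (by positivity : (0:ℝ) < 2*‖A‖)]
    field_simp
  · rw [hswap]
    have key : ∫ t in Set.Ioi (0:ℝ), (C * f t * Cᵀ).trace
        ≤ ∫ t in Set.Ioi (0:ℝ), (M ^ 2 * ‖B‖ ^ 2 * (Cᵀ * C).trace) * Real.exp (-(2*α) * t) :=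
      setIntegral_mono_on htrint (hgint (2*α) (by positivity) _) measurableSet_Ioi hup
    refine le_trans key (le_of_eq ?_)
    rw [MeasureTheory.integral_const_mul, integral_exp_neg_mul_Ioi (by positivity : (0:ℝ) < 2*α)]
    field_simp

lemma fromColumns_ne_zero {q k l : ℕ} {E : Matrix (Fin q) (Fin k) ℝ}
    {Cr : Matrix (Fin q) (Fin l) ℝ} (h : ¬(E = 0 ∧ Cr = 0)) :
    fromCols E Cr ≠ 0 := by
  intro hc
  refine h ⟨?_, ?_⟩ <;> ext i a
  · have := congrFun (congrFun hc i) (Sum.inl a)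
    simpa [Matrix.fromCols] using this
  · have := congrFun (congrFun hc i) (Sum.inr a)
    simpa [Matrix.fromCols] using this

lemma trace_fromColumns_split {q k l : ℕ} (E : Matrix (Fin q) (Fin k) ℝ)
    (Cr : Matrix (Fin q) (Fin l) ℝ) :
    ((fromCols E Cr)ᵀ * fromCols E Cr).trace = (Eᵀ * E).trace + (Crᵀ * Cr).trace := by
  rw [trace_transpose_mul_self, trace_transpose_mul_self, trace_transpose_mul_self,
    ← Finset.sum_add_distrib]
  refine Finset.sum_congr rfl fun i _ => ?_
  rw [Fintype.sum_sum_type]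
  simp [Matrix.fromCols]


/-- **Theorem 2.** Let `A ≠ 0` admit the exponential decay bound
`‖exp(tA)‖₂ ≤ M·exp(−αt)` for all `t ≥ 0`, let `B` satisfy `‖Bᵀ·v‖₂ ≥ σ·‖v‖₂` for all
`v` and some `σ > 0`, and let `P_R = ∫₀^∞ exp(tA)·B·Bᵀ·exp(tAᵀ) dt` be the
controllability Gramian.  For any `C_p` and `C_{r,R} = [E_R, C_r]` (horizontal
concatenation, `E_R`, `C_r` not both zero),
`tr(C_p·P_R·C_pᵀ)/tr(C_{r,R}·P_R·C_{r,R}ᵀ)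
  ≤ 8·(M²·‖A‖₂·‖B‖₂²/(σ²·α))·‖C_p‖_F²/(‖E_R‖_F² + ‖C_r‖_F²)`,
and in particular `tr(C_{r,R}·P_R·C_{r,R}ᵀ) > 0`.  Here `‖M‖_F² = tr(Mᵀ·M)`. -/
theorem stmt_16 {k l m p q : ℕ}
    (A : Matrix (Fin k ⊕ Fin l) (Fin k ⊕ Fin l) ℝ) (hA : A ≠ 0)
    (B : Matrix (Fin k ⊕ Fin l) (Fin m) ℝ)
    (M α : ℝ) (hM : 0 < M) (hα : 0 < α)
    (hdecay : ∀ t : ℝ, 0 ≤ t →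
      ‖NormedSpace.exp (t • A)‖ ≤ M * Real.exp (-α * t))
    (σ : ℝ) (hσ : 0 < σ)
    (hB : ∀ v : Fin k ⊕ Fin l → ℝ, σ * euclNorm v ≤ euclNorm (Bᵀ *ᵥ v))
    (C_p : Matrix (Fin p) (Fin k ⊕ Fin l) ℝ)
    (E_R : Matrix (Fin q) (Fin k) ℝ) (C_r : Matrix (Fin q) (Fin l) ℝ)
    (hnz : ¬(E_R = 0 ∧ C_r = 0)) :
    0 < (fromCols E_R C_r *
          (∫ t in Set.Ioi (0 : ℝ),
            NormedSpace.exp (t • A) * (B * Bᵀ) * NormedSpace.exp (t • Aᵀ)) *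
          (fromCols E_R C_r)ᵀ).trace ∧
      (C_p * (∫ t in Set.Ioi (0 : ℝ),
            NormedSpace.exp (t • A) * (B * Bᵀ) * NormedSpace.exp (t • Aᵀ)) *
          C_pᵀ).trace /
        (fromCols E_R C_r *
          (∫ t in Set.Ioi (0 : ℝ),
            NormedSpace.exp (t • A) * (B * Bᵀ) * NormedSpace.exp (t • Aᵀ)) *
          (fromCols E_R C_r)ᵀ).trace ≤
      8 * (M ^ 2 * ‖A‖ * ‖B‖ ^ 2 / (σ ^ 2 * α)) *
        (C_pᵀ * C_p).trace / ((E_Rᵀ * E_R).trace + (C_rᵀ * C_r).trace) := by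
  cases isEmpty_or_nonempty (Fin k ⊕ Fin l) with
  | inl hempty => exact absurd (Subsingleton.elim A 0) hA
  | inr hne =>
    have hAn : (0:ℝ) < ‖A‖ := by simpa using norm_pos_iff.mpr hA
    set C := fromCols E_R C_r with hC
    obtain ⟨hrlo, _⟩ := gramian_bounds A hA B M α hM hα hdecay σ hσ hB C
    obtain ⟨hplo, hpup⟩ := gramian_bounds A hA B M α hM hα hdecay σ hσ hB C_p
    set T_p := (C_p * (∫ t in Set.Ioi (0 : ℝ),
        NormedSpace.exp (t • A) * (B * Bᵀ) * NormedSpace.exp (t • Aᵀ)) * C_pᵀ).trace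
    set T_r := (C * (∫ t in Set.Ioi (0 : ℝ),
        NormedSpace.exp (t • A) * (B * Bᵀ) * NormedSpace.exp (t • Aᵀ)) * Cᵀ).trace
    set S_p := (C_pᵀ * C_p).trace with hSp
    set S_r := (Cᵀ * C).trace with hSr
    have hSrsplit : S_r = (E_Rᵀ * E_R).trace + (C_rᵀ * C_r).trace :=
      trace_fromColumns_split E_R C_r
    have hSrpos : 0 < S_r := trace_transpose_mul_self_pos (fromColumns_ne_zero hnz)
    have hSpnn : 0 ≤ S_p := by
      rw [hSp, trace_transpose_mul_self]
      exact Finset.sum_nonneg fun i _ => Finset.sum_nonneg fun a _ => sq_nonneg _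
    have hTrpos : 0 < T_r := lt_of_lt_of_le (by positivity) hrlo
    have hTpnn : 0 ≤ T_p := le_trans (by positivity) hplo
    refine ⟨hTrpos, ?_⟩
    rw [← hSrsplit]
    have step1 : T_p / T_r ≤ (M ^ 2 * ‖B‖ ^ 2 / (2 * α) * S_p) / (σ ^ 2 / (2 * ‖A‖) * S_r) :=
      div_le_div₀ (by positivity) hpup (by positivity) hrlo
    refine step1.trans ?_
    have heq : (M ^ 2 * ‖B‖ ^ 2 / (2 * α) * S_p) / (σ ^ 2 / (2 * ‖A‖) * S_r)
        = (M ^ 2 * ‖A‖ * ‖B‖ ^ 2 / (σ ^ 2 * α)) * (S_p / S_r) := by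
      rw [mul_div_mul_comm]
      congr 1
      field_simp
    rw [heq]
    have h8 : 8 * (M ^ 2 * ‖A‖ * ‖B‖ ^ 2 / (σ ^ 2 * α)) * S_p / S_r
        = 8 * ((M ^ 2 * ‖A‖ * ‖B‖ ^ 2 / (σ ^ 2 * α)) * (S_p / S_r)) := by ring
    rw [h8]
    have hnn : 0 ≤ (M ^ 2 * ‖A‖ * ‖B‖ ^ 2 / (σ ^ 2 * α)) * (S_p / S_r) := by positivity
    linarith
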